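/- Let (X,T) be a topological dynamical system and μ ∈ M_T(X). Then μ is ergodic if and only if V^log_T(x) = {μ} for μ-almost every x ∈ X. -/

import Mathlib

open Filter MeasureTheory Topology
open scoped ENNReal NNReal

/-- The `n`-th harmonic number `H_n = ∑_{k=1}^n 1/k` as a real number. -/
noncomputable def H (n : ℕ) : ℝ := ∑ k ∈ Finset.range n, (1 : ℝ) / (k + 1)

lemma H_pos {n : ℕ} (hn : 1 ≤ n) : 0 < H n := by
  have : (0:ℝ) < ∑ k ∈ Finset.range n, (1 : ℝ) / (k + 1) := by
    apply Finset.sum_pos (fun k _ => by positivity)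
    exact ⟨0, Finset.mem_range.2 hn⟩
  exact this

lemma H_nonneg (n : ℕ) : 0 ≤ H n := by
  apply Finset.sum_nonneg; intro k _; positivity

lemma H_tendsto : Tendsto H atTop atTop := by
  have := Real.tendsto_sum_range_one_div_nat_succ_atTop
  exact this

/-- Weighted averages of a convergent sequence converge, when total weights tend to infinity. -/
lemma weighted_avg_tendsto {w b : ℕ → ℝ} (hw : ∀ n, 0 ≤ w n) {L : ℝ}
    (hW : Tendsto (fun n => ∑ k ∈ Finset.range n, w k) atTop atTop)
    (hb : Tendsto b atTop (𝓝 L)) :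
    Tendsto (fun n => (∑ k ∈ Finset.range n, w k * b k) / (∑ k ∈ Finset.range n, w k))
      atTop (𝓝 L) := by
  set W : ℕ → ℝ := fun n => ∑ k ∈ Finset.range n, w k with hWdef
  have key : Tendsto (fun n => (∑ k ∈ Finset.range n, w k * (b k - L)) / W n) atTop (𝓝 0) := by
    rw [Metric.tendsto_atTop]
    intro ε hε
    rw [Metric.tendsto_atTop] at hb
    obtain ⟨N, hN⟩ := hb (ε/2) (by positivity)
    set C : ℝ := ∑ k ∈ Finset.range N, w k * |b k - L| with hC
    have hC0 : 0 ≤ C := Finset.sum_nonneg fun k _ => mul_nonneg (hw k) (abs_nonneg _)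
    obtain ⟨M, hM⟩ := (tendsto_atTop.1 hW (max (2*C/ε + 1) 1)).exists_forall_of_atTop
    refine ⟨max M N, fun n hn => ?_⟩
    have hnM : M ≤ n := le_trans (le_max_left _ _) hn
    have hnN : N ≤ n := le_trans (le_max_right _ _) hn
    have hWn : max (2*C/ε + 1) 1 ≤ W n := hM n hnM
    have hWpos : (0:ℝ) < W n := lt_of_lt_of_le zero_lt_one (le_trans (le_max_right _ _) hWn)
    rw [Real.dist_eq, sub_zero, abs_div, abs_of_pos hWpos, div_lt_iff₀ hWpos]
    have habs : |∑ k ∈ Finset.range n, w k * (b k - L)| ≤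
        C + (ε/2) * W n := by
      calc |∑ k ∈ Finset.range n, w k * (b k - L)|
          ≤ ∑ k ∈ Finset.range n, |w k * (b k - L)| := Finset.abs_sum_le_sum_abs _ _
        _ = ∑ k ∈ Finset.range n, w k * |b k - L| := by
            apply Finset.sum_congr rfl; intro k _
            rw [abs_mul, abs_of_nonneg (hw k)]
        _ = C + ∑ k ∈ Finset.Ico N n, w k * |b k - L| := by
            rw [hC, ← Finset.sum_range_add_sum_Ico _ hnN]
        _ ≤ C + ∑ k ∈ Finset.Ico N n, w k * (ε/2) := by
            gcongr with k hk
            · exact hw k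
            · have : dist (b k) L < ε/2 := hN k (Finset.mem_Ico.1 hk).1
              rw [Real.dist_eq] at this
              exact this.le
        _ = C + (∑ k ∈ Finset.Ico N n, w k) * (ε/2) := by rw [Finset.sum_mul]
        _ ≤ C + W n * (ε/2) := by
            have hIco : ∑ k ∈ Finset.Ico N n, w k ≤ W n := by
              have h0 : 0 ≤ ∑ k ∈ Finset.range N, w k := Finset.sum_nonneg fun k _ => hw k
              have h1 := Finset.sum_range_add_sum_Ico w hnN
              simp only [hWdef]
              linarith
            have h2 : (0:ℝ) ≤ ε/2 := by positivity
            nlinarith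
        _ = C + (ε/2) * W n := by ring
    refine lt_of_le_of_lt habs ?_
    have h1 : C < (ε/2) * W n := by
      have h2 : 2*C/ε + 1 ≤ W n := le_trans (le_max_left _ _) hWn
      have : 2*C/ε < W n := by linarith
      rw [div_lt_iff₀ hε] at this
      nlinarith
    linarith
  have heq : ∀ᶠ n in atTop, (∑ k ∈ Finset.range n, w k * (b k - L)) / W n + L
      = (∑ k ∈ Finset.range n, w k * b k) / W n := by
    have hWpos : ∀ᶠ n in atTop, 0 < W n := hW.eventually_gt_atTop 0
    filter_upwards [hWpos] with n hn
    have : ∑ k ∈ Finset.range n, w k * (b k - L)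
        = (∑ k ∈ Finset.range n, w k * b k) - W n * L := by
      rw [hWdef, Finset.sum_mul]
      rw [← Finset.sum_sub_distrib]
      apply Finset.sum_congr rfl; intro k _; ring
    rw [this, sub_div, mul_comm, mul_div_assoc, div_self hn.ne', mul_one]
    ring
  have h2 : Tendsto (fun n => (∑ k ∈ Finset.range n, w k * (b k - L)) / W n + L) atTop (𝓝 (0 + L)) :=
    key.add tendsto_const_nhds
  rw [zero_add] at h2
  exact Tendsto.congr' heq h2
lemma abel_identity (a : ℕ → ℝ) (n : ℕ) :
    ∑ k ∈ Finset.range n, (1 / (k + 1 : ℝ)) * a k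
      = (∑ k ∈ Finset.range n, a k) / n
        + ∑ k ∈ Finset.range n, (∑ j ∈ Finset.range k, a j) / (k * (k + 1)) := by
  induction n with
  | zero => simp
  | succ n ih =>
    rw [Finset.sum_range_succ, ih, Finset.sum_range_succ (fun k => (∑ j ∈ Finset.range k, a j) / (k * (k+1))),
      Finset.sum_range_succ a]
    rcases Nat.eq_zero_or_pos n with hn | hn
    · subst hn; simp
    · have hn0 : (n:ℝ) ≠ 0 := Nat.cast_ne_zero.2 hn.ne'
      have hn1 : (n:ℝ) + 1 ≠ 0 := by positivity
      field_simp
      push_cast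
      ring

lemma cesaro_to_log {a : ℕ → ℝ} {L : ℝ}
    (h : Tendsto (fun n => (∑ k ∈ Finset.range n, a k) / n) atTop (𝓝 L)) :
    Tendsto (fun n => (1 / H n) * ∑ k ∈ Finset.range n, (1 / (k + 1 : ℝ)) * a k)
      atTop (𝓝 L) := by
  set A : ℕ → ℝ := fun n => (∑ k ∈ Finset.range n, a k) / n with hA
  have habel : ∀ n, ∑ k ∈ Finset.range n, (1 / (k + 1 : ℝ)) * a k
      = A n + ∑ k ∈ Finset.range n, (1 / (k + 1 : ℝ)) * A k := by
    intro n
    rw [abel_identity a n]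
    congr 1
    apply Finset.sum_congr rfl
    intro k _
    rw [hA]
    rw [show ((k:ℝ) * (k+1)) = (k:ℝ) * (k+1) from rfl, ← div_div]
    ring
  have h1 : Tendsto (fun n => (∑ k ∈ Finset.range n, (1 / (k + 1 : ℝ)) * A k)
      / (∑ k ∈ Finset.range n, (1 / (k + 1 : ℝ)))) atTop (𝓝 L) := by
    exact weighted_avg_tendsto (fun k => by positivity) H_tendsto h
  have h2 : Tendsto (fun n => A n * (H n)⁻¹) atTop (𝓝 0) := by
    have hinv : Tendsto (fun n => (H n)⁻¹) atTop (𝓝 (0:ℝ)) :=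
      tendsto_inv_atTop_zero.comp H_tendsto
    have := h.mul hinv
    rw [mul_zero] at this
    exact this
  have hsum := h2.add h1
  rw [zero_add] at hsum
  refine hsum.congr (fun n => ?_)
  have : (∑ k ∈ Finset.range n, (1 / (k + 1 : ℝ))) = H n := rfl
  rw [this, habel n]
  field_simp

section LimsupHelpers

lemma bddAbove_of_abs {a : ℕ → ℝ} {C : ℝ} (ha : ∀ n, |a n| ≤ C) :
    IsBoundedUnder (· ≤ ·) atTop a :=
  isBoundedUnder_of ⟨C, fun n => (abs_le.1 (ha n)).2⟩

lemma bddBelow_of_abs {a : ℕ → ℝ} {C : ℝ} (ha : ∀ n, |a n| ≤ C) :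
    IsBoundedUnder (· ≥ ·) atTop a :=
  isBoundedUnder_of ⟨-C, fun n => (abs_le.1 (ha n)).1⟩

lemma limsup_le_limsup_of_tendsto_sub {a b : ℕ → ℝ} {C : ℝ}
    (hab : Tendsto (fun n => a n - b n) atTop (𝓝 0))
    (ha : ∀ n, |a n| ≤ C) (hb : ∀ n, |b n| ≤ C) :
    limsup a atTop ≤ limsup b atTop := by
  refine le_of_forall_pos_le_add (fun ε hε => ?_)
  have hev : ∀ᶠ n in atTop, a n ≤ b n + ε := by
    obtain ⟨N, hN⟩ := Metric.tendsto_atTop.1 hab ε hε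
    refine eventually_atTop.2 ⟨N, fun n hn => ?_⟩
    have := hN n hn
    rw [Real.dist_eq, sub_zero] at this
    have := (abs_lt.1 this).2
    linarith
  calc limsup a atTop ≤ limsup (fun n => b n + ε) atTop := by
        refine limsup_le_limsup hev ?_ ?_
        · exact (bddBelow_of_abs ha).isCoboundedUnder_le
        · exact isBoundedUnder_of ⟨C + ε, fun n => by have := (abs_le.1 (hb n)).2; linarith⟩
    _ = limsup b atTop + ε :=
        limsup_add_const atTop b ε (bddAbove_of_abs hb) (bddBelow_of_abs hb).isCoboundedUnder_le

lemma limsup_eq_limsup_of_tendsto_sub {a b : ℕ → ℝ} {C : ℝ}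
    (hab : Tendsto (fun n => a n - b n) atTop (𝓝 0))
    (ha : ∀ n, |a n| ≤ C) (hb : ∀ n, |b n| ≤ C) :
    limsup a atTop = limsup b atTop := by
  refine le_antisymm (limsup_le_limsup_of_tendsto_sub hab ha hb) ?_
  have : Tendsto (fun n => b n - a n) atTop (𝓝 0) := by
    have := hab.neg; rw [neg_zero] at this
    exact this.congr (fun n => by ring)
  exact limsup_le_limsup_of_tendsto_sub this hb ha

lemma liminf_le_liminf_of_tendsto_sub {a b : ℕ → ℝ} {C : ℝ}
    (hab : Tendsto (fun n => a n - b n) atTop (𝓝 0))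
    (ha : ∀ n, |a n| ≤ C) (hb : ∀ n, |b n| ≤ C) :
    liminf a atTop ≤ liminf b atTop := by
  refine le_of_forall_pos_le_add (fun ε hε => ?_)
  have hev : ∀ᶠ n in atTop, a n ≤ b n + ε := by
    obtain ⟨N, hN⟩ := Metric.tendsto_atTop.1 hab ε hε
    refine eventually_atTop.2 ⟨N, fun n hn => ?_⟩
    have := hN n hn
    rw [Real.dist_eq, sub_zero] at this
    have := (abs_lt.1 this).2
    linarith
  calc liminf a atTop ≤ liminf (fun n => b n + ε) atTop := by
        refine liminf_le_liminf hev ?_ ?_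
        · exact bddBelow_of_abs ha
        · exact (isBoundedUnder_of
            ⟨C + ε, fun n => by have := (abs_le.1 (hb n)).2; linarith⟩).isCoboundedUnder_ge
    _ = liminf b atTop + ε :=
        liminf_add_const atTop b ε (bddAbove_of_abs hb).isCoboundedUnder_ge (bddBelow_of_abs hb)

lemma liminf_eq_liminf_of_tendsto_sub {a b : ℕ → ℝ} {C : ℝ}
    (hab : Tendsto (fun n => a n - b n) atTop (𝓝 0))
    (ha : ∀ n, |a n| ≤ C) (hb : ∀ n, |b n| ≤ C) :
    liminf a atTop = liminf b atTop := by
  refine le_antisymm (liminf_le_liminf_of_tendsto_sub hab ha hb) ?_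
  have : Tendsto (fun n => b n - a n) atTop (𝓝 0) := by
    have := hab.neg; rw [neg_zero] at this
    exact this.congr (fun n => by ring)
  exact liminf_le_liminf_of_tendsto_sub this hb ha

end LimsupHelpers
section ErgodicTheory
set_option linter.unusedSectionVars false

variable {X : Type*} [MetricSpace X] [CompactSpace X] [Nonempty X]
  [MeasurableSpace X] [BorelSpace X] {T : X → X}

lemma integrable_of_bdd {ν : Measure X} [IsFiniteMeasure ν] {g : X → ℝ} {C : ℝ}
    (hgm : Measurable g) (hgb : ∀ x, |g x| ≤ C) : Integrable g ν :=
  Integrable.mono' (integrable_const C) hgm.aestronglyMeasurable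
    (ae_of_all _ fun x => by simpa [Real.norm_eq_abs] using hgb x)

lemma integral_comp_iterate {ν : Measure X} (hm : MeasurePreserving T ν ν) {g : X → ℝ}
    (hg : AEStronglyMeasurable g ν) (k : ℕ) : ∫ x, g (T^[k] x) ∂ν = ∫ x, g x ∂ν := by
  have h := hm.iterate k
  have hgm : AEStronglyMeasurable g (Measure.map (T^[k]) ν) := by rw [h.map_eq]; exact hg
  calc ∫ x, g (T^[k] x) ∂ν = ∫ y, g y ∂(Measure.map (T^[k]) ν) :=
        (integral_map h.measurable.aemeasurable hgm).symm
    _ = ∫ x, g x ∂ν := by rw [h.map_eq]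

lemma measurable_birkhoffSum (hT : Continuous T) {g : X → ℝ} (hgm : Measurable g) (n : ℕ) :
    Measurable (birkhoffSum T g n) := by
  unfold birkhoffSum
  exact Finset.measurable_sum _ (fun k _ => hgm.comp (hT.iterate k).measurable)

lemma abs_birkhoffSum_le {g : X → ℝ} {C : ℝ} (hgb : ∀ x, |g x| ≤ C) (n : ℕ) (x : X) :
    |birkhoffSum T g n x| ≤ n * C := by
  unfold birkhoffSum
  calc |∑ k ∈ Finset.range n, g (T^[k] x)| ≤ ∑ k ∈ Finset.range n, |g (T^[k] x)| :=
        Finset.abs_sum_le_sum_abs _ _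
    _ ≤ ∑ _k ∈ Finset.range n, C := Finset.sum_le_sum (fun k _ => hgb _)
    _ = n * C := by simp [mul_comm]

variable (T) in
/-- `MaxS T g N x = max_{1 ≤ m ≤ N+1} (S_m g)(x)`. -/
noncomputable def MaxS (g : X → ℝ) : ℕ → X → ℝ
  | 0 => g
  | (N+1) => fun x => max (MaxS g N x) (birkhoffSum T g (N+2) x)

lemma measurable_MaxS (hT : Continuous T) {g : X → ℝ} (hgm : Measurable g) (N : ℕ) :
    Measurable (MaxS T g N) := by
  induction N with
  | zero => exact hgm
  | succ N ih => exact ih.max (measurable_birkhoffSum hT hgm (N+2))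

lemma birkhoffSum_le_MaxS {g : X → ℝ} (N : ℕ) (x : X) :
    ∀ {m : ℕ}, 1 ≤ m → m ≤ N + 1 → birkhoffSum T g m x ≤ MaxS T g N x := by
  induction N with
  | zero =>
    intro m h1 h2
    have : m = 1 := le_antisymm h2 h1
    subst this
    rw [birkhoffSum_one]
    exact le_rfl
  | succ N ih =>
    intro m h1 h2
    rcases Nat.lt_or_ge m (N+2) with h | h
    · exact le_trans (ih h1 (Nat.lt_succ_iff.1 h)) (le_max_left _ _)
    · have : m = N + 2 := le_antisymm h2 h
      subst this
      exact le_max_right _ _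

lemma MaxS_attained {g : X → ℝ} (N : ℕ) (x : X) :
    ∃ m, 1 ≤ m ∧ m ≤ N + 1 ∧ MaxS T g N x = birkhoffSum T g m x := by
  induction N with
  | zero => exact ⟨1, le_rfl, le_rfl, (birkhoffSum_one _ _ _).symm⟩
  | succ N ih =>
    obtain ⟨m, h1, h2, heq⟩ := ih
    rcases max_cases (MaxS T g N x) (birkhoffSum T g (N+2) x) with ⟨hmax, _⟩ | ⟨hmax, _⟩
    · exact ⟨m, h1, h2.trans (Nat.le_succ _), by rw [show MaxS T g (N+1) x = max (MaxS T g N x) (birkhoffSum T g (N+2) x) from rfl, hmax, heq]⟩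
    · exact ⟨N+2, by omega, le_rfl, by rw [show MaxS T g (N+1) x = max (MaxS T g N x) (birkhoffSum T g (N+2) x) from rfl, hmax]⟩

lemma abs_MaxS_le {g : X → ℝ} {C : ℝ} (hgb : ∀ x, |g x| ≤ C) (N : ℕ) (x : X) :
    |MaxS T g N x| ≤ (N+1) * max C 0 := by
  obtain ⟨m, h1, h2, heq⟩ := MaxS_attained (T := T) (g := g) N x
  rw [heq]
  calc |birkhoffSum T g m x| ≤ m * C := abs_birkhoffSum_le hgb m x
    _ ≤ (N+1) * max C 0 := by
      have hC : 0 ≤ max C 0 := le_max_right _ _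
      have : C ≤ max C 0 := le_max_left _ _
      have hm : (m:ℝ) ≤ (N:ℝ)+1 := by exact_mod_cast h2
      have h0 : (0:ℝ) ≤ m := Nat.cast_nonneg m
      nlinarith

lemma MaxS_key {g : X → ℝ} (N : ℕ) (x : X) :
    MaxS T g N x ≤ g x + max (MaxS T g N (T x)) 0 := by
  obtain ⟨m, h1, h2, heq⟩ := MaxS_attained (T := T) (g := g) N x
  rw [heq]
  rcases Nat.exists_eq_add_of_le h1 with ⟨q, rfl⟩
  rcases Nat.eq_zero_or_pos q with hq | hq
  · subst hq
    rw [birkhoffSum_one]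
    exact le_add_of_nonneg_right (le_max_right _ _)
  · rw [show 1 + q = q + 1 by omega, birkhoffSum_succ']
    have hle : birkhoffSum T g q (T x) ≤ MaxS T g N (T x) :=
      birkhoffSum_le_MaxS N (T x) hq (by omega)
    have : birkhoffSum T g q (T x) ≤ max (MaxS T g N (T x)) 0 := hle.trans (le_max_left _ _)
    linarith

/-- The maximal ergodic theorem (for bounded measurable functions). -/
lemma maximal_ergodic {ν : Measure X} [IsProbabilityMeasure ν] (hT : Continuous T)
    (hm : MeasurePreserving T ν ν) {g : X → ℝ} {C : ℝ} (hgm : Measurable g)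
    (hgb : ∀ x, |g x| ≤ C) :
    0 ≤ ∫ x in {x | ∃ n, 0 < birkhoffSum T g (n+1) x}, g x ∂ν := by
  set E : ℕ → Set X := fun N => {x | 0 < MaxS T g N x} with hE
  have hEmeas : ∀ N, MeasurableSet (E N) :=
    fun N => measurableSet_lt measurable_const (measurable_MaxS hT hgm N)
  have hg_int : Integrable g ν := integrable_of_bdd hgm hgb
  -- step 1 : each truncated integral is nonneg
  have step1 : ∀ N, 0 ≤ ∫ x in E N, g x ∂ν := by
    intro N
    set P : X → ℝ := fun x => max (MaxS T g N x) 0 with hP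
    have hPm : Measurable P := (measurable_MaxS hT hgm N).max measurable_const
    have hPb : ∀ x, |P x| ≤ (N+1) * max C 0 := by
      intro x
      have h1 := abs_MaxS_le (T := T) hgb N x
      have h2 : |P x| ≤ |MaxS T g N x| := by
        rw [hP]
        rcases max_cases (MaxS T g N x) (0:ℝ) with ⟨hc, _⟩ | ⟨hc, hc2⟩
        · simp [hc]
        · simp only [hc, abs_zero]
          exact abs_nonneg _
      linarith
    have hP_int : Integrable P ν := integrable_of_bdd hPm hPb
    have hPT_int : Integrable (fun x => P (T x)) ν :=
      integrable_of_bdd (hPm.comp hm.measurable) (fun x => hPb (T x))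
    have hM_int : Integrable (MaxS T g N) ν :=
      integrable_of_bdd (measurable_MaxS hT hgm N) (abs_MaxS_le hgb N)
    -- pointwise : MaxS N x - P (T x) ≤ g x
    have hpt : ∀ x, MaxS T g N x - P (T x) ≤ g x := by
      intro x
      have := MaxS_key (T := T) (g := g) N x
      rw [hP]
      linarith
    have int1 : ∫ x in E N, (MaxS T g N x - P (T x)) ∂ν ≤ ∫ x in E N, g x ∂ν := by
      apply setIntegral_mono_on ((hM_int.sub hPT_int).integrableOn) (hg_int.integrableOn)
        (hEmeas N)
      intro x _
      exact hpt x
    have int2 : ∫ x in E N, (MaxS T g N x - P (T x)) ∂ν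
        = ∫ x in E N, MaxS T g N x ∂ν - ∫ x in E N, P (T x) ∂ν :=
      integral_sub hM_int.integrableOn hPT_int.integrableOn
    have int3 : ∫ x in E N, MaxS T g N x ∂ν = ∫ x in E N, P x ∂ν := by
      apply setIntegral_congr_fun (hEmeas N)
      intro x hx
      rw [hP]
      exact (max_eq_left (le_of_lt hx)).symm
    have int4 : ∫ x in E N, P x ∂ν = ∫ x, P x ∂ν := by
      rw [← integral_add_compl (hEmeas N) hP_int]
      have : ∫ x in (E N)ᶜ, P x ∂ν = 0 := by
        apply setIntegral_eq_zero_of_forall_eq_zero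
        intro x hx
        rw [hP]
        simp only [Set.mem_compl_iff, hE, Set.mem_setOf_eq, not_lt] at hx
        exact max_eq_right hx
      rw [this, add_zero]
    have int5 : ∫ x in E N, P (T x) ∂ν ≤ ∫ x, P (T x) ∂ν := by
      apply setIntegral_le_integral hPT_int
      exact ae_of_all _ (fun x => le_max_right _ _)
    have int6 : ∫ x, P (T x) ∂ν = ∫ x, P x ∂ν := by
      have := integral_comp_iterate hm hPm.aestronglyMeasurable 1
      simpa using this
    linarith
  -- step 2 : pass to the union
  have hmono : Monotone E := by
    apply monotone_nat_of_le_succ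
    intro N x hx
    simp only [hE, Set.mem_setOf_eq] at hx ⊢
    exact lt_of_lt_of_le hx (le_max_left _ _)
  have hunion : ⋃ N, E N = {x | ∃ n, 0 < birkhoffSum T g (n+1) x} := by
    ext x
    simp only [Set.mem_iUnion, hE, Set.mem_setOf_eq]
    constructor
    · rintro ⟨N, hN⟩
      obtain ⟨m, h1, h2, heq⟩ := MaxS_attained (T := T) (g := g) N x
      rcases Nat.exists_eq_add_of_le h1 with ⟨q, rfl⟩
      exact ⟨q, by rw [show q + 1 = 1 + q by omega, ← heq]; exact hN⟩
    · rintro ⟨n, hn⟩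
      exact ⟨n, lt_of_lt_of_le hn (birkhoffSum_le_MaxS n x (by omega) le_rfl)⟩
  have htendsto := tendsto_setIntegral_of_monotone hEmeas hmono
    (hg_int.integrableOn : IntegrableOn g (⋃ N, E N) ν)
  rw [hunion] at htendsto
  exact ge_of_tendsto' htendsto step1

end ErgodicTheory
section Birkhoff
set_option linter.unusedSectionVars false
variable {X : Type*} [MetricSpace X] [CompactSpace X] [Nonempty X]
  [MeasurableSpace X] [BorelSpace X] {T : X → X}

lemma abs_f_le (f : C(X, ℝ)) (x : X) : |f x| ≤ ‖f‖ := by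
  have := f.norm_coe_le_norm x
  rwa [Real.norm_eq_abs] at this

lemma abs_avg_le (f : C(X, ℝ)) (n : ℕ) (x : X) :
    |birkhoffSum T f n x / n| ≤ ‖f‖ := by
  rcases Nat.eq_zero_or_pos n with hn | hn
  · subst hn; simp [norm_nonneg]
  · have h1 : |birkhoffSum T f n x| ≤ n * ‖f‖ := abs_birkhoffSum_le (fun x => abs_f_le f x) n x
    have hn0 : (0:ℝ) < n := by exact_mod_cast hn
    rw [abs_div, abs_of_pos hn0, div_le_iff₀ hn0]
    linarith

lemma avg_shift_tendsto (f : C(X, ℝ)) (x : X) :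
    Tendsto (fun n => birkhoffSum T f n (T x) / n - birkhoffSum T f n x / n) atTop (𝓝 0) := by
  refine squeeze_zero_norm (fun n => ?_) (tendsto_const_div_atTop_nhds_zero_nat (2 * ‖f‖))
  · 
    rw [div_sub_div_same]
    have := birkhoffSum_apply_sub_birkhoffSum T (f : X → ℝ) n x
    rw [this]
    rcases Nat.eq_zero_or_pos n with hn | hn
    · subst hn; simp [norm_nonneg]
    · have hn0 : (0:ℝ) < n := by exact_mod_cast hn
      rw [Real.norm_eq_abs, abs_div, abs_of_pos hn0, div_le_div_iff_of_pos_right hn0]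
      have h1 := abs_f_le f (T^[n] x)
      have h2 := abs_f_le f x
      calc |f (T^[n] x) - f x| ≤ |f (T^[n] x)| + |f x| := abs_sub _ _
        _ ≤ 2 * ‖f‖ := by linarith

/-- Pointwise (non-ergodic) Birkhoff theorem: almost everywhere, the Birkhoff averages of a
continuous function converge. -/
lemma birkhoff_ae {ν : Measure X} [IsProbabilityMeasure ν] (hT : Continuous T)
    (hm : MeasurePreserving T ν ν) (f : C(X, ℝ)) :
    ∀ᵐ x ∂ν, Tendsto (fun n => birkhoffSum T f n x / n) atTop
      (𝓝 (limsup (fun n => birkhoffSum T f n x / n) atTop)) := by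
  set A : ℕ → X → ℝ := fun n x => birkhoffSum T f n x / n with hA
  have hAmeas : ∀ n, Measurable (A n) :=
    fun n => (measurable_birkhoffSum hT f.continuous.measurable n).div_const _
  have habs : ∀ n x, |A n x| ≤ ‖f‖ := fun n x => abs_avg_le f n x
  set u : X → ℝ := fun x => limsup (fun n => A n x) atTop with hu
  set l : X → ℝ := fun x => liminf (fun n => A n x) atTop with hl
  have hu_meas : Measurable u := Measurable.limsup hAmeas
  have hl_meas : Measurable l := Measurable.liminf hAmeas
  have hu_inv : ∀ x, u (T x) = u x := fun x =>
    limsup_eq_limsup_of_tendsto_sub (avg_shift_tendsto f x) (fun n => habs n (T x))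
      (fun n => habs n x)
  have hl_inv : ∀ x, l (T x) = l x := fun x =>
    liminf_eq_liminf_of_tendsto_sub (avg_shift_tendsto f x) (fun n => habs n (T x))
      (fun n => habs n x)
  -- the bad sets
  set E : ℚ → ℚ → Set X := fun a b => {x | l x < a} ∩ {x | (b:ℝ) < u x} with hE
  have hEmeas : ∀ a b, MeasurableSet (E a b) := fun a b =>
    (measurableSet_lt hl_meas measurable_const).inter
      (measurableSet_lt measurable_const hu_meas)
  have hEinv : ∀ a b, T ⁻¹' (E a b) = E a b := by
    intro a b
    ext x
    simp only [hE, Set.mem_preimage, Set.mem_inter_iff, Set.mem_setOf_eq, hu_inv x, hl_inv x]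
  have hEiter : ∀ a b x, x ∈ E a b → ∀ k, T^[k] x ∈ E a b := by
    intro a b x hx k
    induction k with
    | zero => exact hx
    | succ k ih =>
      rw [Function.iterate_succ_apply']
      have h2 : T^[k] x ∈ T ⁻¹' (E a b) := by rw [hEinv a b]; exact ih
      exact h2
  have hEiter' : ∀ a b x, x ∉ E a b → ∀ k, T^[k] x ∉ E a b := by
    intro a b x hx k
    induction k with
    | zero => exact hx
    | succ k ih =>
      intro hmem
      rw [Function.iterate_succ_apply'] at hmem
      have h2 : T^[k] x ∈ T ⁻¹' (E a b) := hmem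
      rw [hEinv a b] at h2
      exact ih h2
  -- each bad set is null
  have hnull : ∀ a b : ℚ, (a : ℝ) < b → ν (E a b) = 0 := by
    intro a b hab
    -- first indicator function
    have key : ∀ (g : X → ℝ) (hgm : Measurable g) (C : ℝ) (hgb : ∀ x, |g x| ≤ C)
        (hpos : ∀ x ∈ E a b, ∃ n, 0 < birkhoffSum T g (n+1) x),
        0 ≤ ∫ x in E a b, g x ∂ν := by
      intro g hgm C hgb hpos
      set g1 : X → ℝ := (E a b).indicator g with hg1
      have hg1m : Measurable g1 := hgm.indicator (hEmeas a b)
      have hg1b : ∀ x, |g1 x| ≤ C := by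
        intro x
        rw [hg1]
        by_cases hx : x ∈ E a b
        · rw [Set.indicator_of_mem hx]; exact hgb x
        · rw [Set.indicator_of_notMem hx, abs_zero]
          exact le_trans (abs_nonneg _) (hgb x)
      have hSeq : ∀ x ∈ E a b, ∀ n, birkhoffSum T g1 n x = birkhoffSum T g n x := by
        intro x hx n
        unfold birkhoffSum
        apply Finset.sum_congr rfl
        intro k _
        rw [hg1, Set.indicator_of_mem (hEiter a b x hx k)]
      have hSeq' : ∀ x, x ∉ E a b → ∀ n, birkhoffSum T g1 n x = 0 := by
        intro x hx n
        unfold birkhoffSum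
        apply Finset.sum_eq_zero
        intro k _
        rw [hg1, Set.indicator_of_notMem (hEiter' a b x hx k)]
      have hset : {x | ∃ n, 0 < birkhoffSum T g1 (n+1) x} = E a b := by
        ext x
        simp only [Set.mem_setOf_eq]
        constructor
        · rintro ⟨n, hn⟩
          by_contra hx
          rw [hSeq' x hx (n+1)] at hn
          exact lt_irrefl _ hn
        · intro hx
          obtain ⟨n, hn⟩ := hpos x hx
          exact ⟨n, by rwa [hSeq x hx (n+1)]⟩
      have := maximal_ergodic hT hm hg1m hg1b
      rw [hset] at this
      calc (0:ℝ) ≤ ∫ x in E a b, g1 x ∂ν := this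
        _ = ∫ x in E a b, g x ∂ν := by
            apply setIntegral_congr_fun (hEmeas a b)
            intro x hx
            rw [hg1, Set.indicator_of_mem hx]
  -- apply with f - b
    have h1 : 0 ≤ ∫ x in E a b, (f x - b) ∂ν := by
      apply key _ (f.continuous.measurable.sub measurable_const) (‖f‖ + |(b:ℝ)|)
      · intro x
        have := abs_f_le f x
        have h2 := abs_sub (f x) (b:ℝ)
        have : |f x - b| ≤ |f x| + |(b:ℝ)| := h2
        have h3 := abs_f_le f x
        show |f x - (b:ℝ)| ≤ ‖f‖ + |(b:ℝ)|
        linarith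
      · intro x hx
        have hbu : (b:ℝ) < u x := hx.2
        by_contra hcon
        push_neg at hcon
        have hle : ∀ n, 1 ≤ n → A n x ≤ b := by
          intro n hn
          rcases Nat.exists_eq_add_of_le hn with ⟨q, rfl⟩
          have := hcon q
          have hq : birkhoffSum T (fun y => f y - (b:ℝ)) (q+1) x
              = birkhoffSum T f (q+1) x - (q+1) * b := by
            unfold birkhoffSum
            rw [Finset.sum_sub_distrib, Finset.sum_const, Finset.card_range, nsmul_eq_mul]
            push_cast
            ring
          rw [show 1 + q = q + 1 by omega]
          have h5 : birkhoffSum T f (q+1) x ≤ (q+1) * b := by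
            have h6 : birkhoffSum T (fun y => f y - (b:ℝ)) (q+1) x ≤ 0 := this
            rw [hq] at h6
            linarith
          rw [hA]
          rw [div_le_iff₀ (by positivity : (0:ℝ) < ((q+1:ℕ):ℝ))]
          push_cast
          push_cast at h5
          linarith
        have : u x ≤ b := by
          apply limsup_le_of_le ((bddBelow_of_abs (fun n => habs n x)).isCoboundedUnder_le)
          exact eventually_atTop.2 ⟨1, hle⟩
        linarith
    have h2 : 0 ≤ ∫ x in E a b, ((a:ℝ) - f x) ∂ν := by
      apply key _ (measurable_const.sub f.continuous.measurable) (‖f‖ + |(a:ℝ)|)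
      · intro x
        have h3 := abs_f_le f x
        have : |(a:ℝ) - f x| ≤ |(a:ℝ)| + |f x| := abs_sub _ _
        show |(a:ℝ) - f x| ≤ ‖f‖ + |(a:ℝ)|
        linarith
      · intro x hx
        have hla : l x < a := hx.1
        by_contra hcon
        push_neg at hcon
        have hle : ∀ n, 1 ≤ n → (a:ℝ) ≤ A n x := by
          intro n hn
          rcases Nat.exists_eq_add_of_le hn with ⟨q, rfl⟩
          have := hcon q
          have hq : birkhoffSum T (fun y => (a:ℝ) - f y) (q+1) x
              = (q+1) * a - birkhoffSum T f (q+1) x := by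
            unfold birkhoffSum
            rw [Finset.sum_sub_distrib, Finset.sum_const, Finset.card_range, nsmul_eq_mul]
            push_cast
            ring
          rw [show 1 + q = q + 1 by omega]
          have h5 : ((q:ℝ)+1) * a ≤ birkhoffSum T f (q+1) x := by
            have h6 : birkhoffSum T (fun y => (a:ℝ) - f y) (q+1) x ≤ 0 := this
            rw [hq] at h6
            push_cast at h6 ⊢
            linarith
          rw [hA]
          rw [le_div_iff₀ (by positivity : (0:ℝ) < ((q+1:ℕ):ℝ))]
          push_cast
          linarith
        have : (a:ℝ) ≤ l x := by
          apply le_liminf_of_le ((bddAbove_of_abs (fun n => habs n x)).isCoboundedUnder_ge)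
          exact eventually_atTop.2 ⟨1, hle⟩
        linarith
    -- combine
    have hint : IntegrableOn (fun x => f x) (E a b) ν :=
      (integrable_of_bdd f.continuous.measurable (fun x => abs_f_le f x)).integrableOn
    have hc : IntegrableOn (fun _ : X => (1:ℝ)) (E a b) ν := integrableOn_const (measure_ne_top ν _)
    rw [integral_sub hint (integrableOn_const (measure_ne_top ν _))] at h1
    rw [integral_sub (integrableOn_const (C := (a:ℝ)) (measure_ne_top ν _)) hint] at h2
    rw [setIntegral_const] at h1 h2
    rw [measureReal_def] at h1 h2
    have hr : (0:ℝ) ≤ (ν (E a b)).toReal := ENNReal.toReal_nonneg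
    have : (ν (E a b)).toReal = 0 := by
      rcases lt_or_eq_of_le hr with hlt | heq
      · exfalso
        have hba : (ν (E a b)).toReal * b ≤ (ν (E a b)).toReal * a := by
          simp only [smul_eq_mul] at h1 h2
          linarith
        have := mul_lt_mul_of_pos_left hab hlt
        linarith
      · exact heq.symm
    exact (ENNReal.toReal_eq_zero_iff _).1 this |>.resolve_right (fun h => (measure_ne_top ν _) h)
  -- conclude
  have hae : ∀ᵐ x ∂ν, ∀ p : ℚ × ℚ, (p.1 : ℝ) < p.2 → x ∉ E p.1 p.2 := by
    rw [ae_all_iff]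
    intro p
    by_cases hp : (p.1 : ℝ) < p.2
    · have := hnull p.1 p.2 hp
      filter_upwards [(compl_mem_ae_iff).2 this] with x hx
      intro _
      exact hx
    · exact ae_of_all _ (fun x h => absurd h hp)
  filter_upwards [hae] with x hx
  have hbd1 : IsBoundedUnder (· ≤ ·) atTop (fun n => A n x) := bddAbove_of_abs (fun n => habs n x)
  have hbd2 : IsBoundedUnder (· ≥ ·) atTop (fun n => A n x) := bddBelow_of_abs (fun n => habs n x)
  have hlu : l x = u x := by
    rcases lt_or_eq_of_le (liminf_le_limsup (u := fun n => A n x) hbd1 hbd2) with hlt | heq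
    · exfalso
      obtain ⟨a, ha1, ha2⟩ := exists_rat_btwn hlt
      obtain ⟨b, hb1, hb2⟩ := exists_rat_btwn ha2
      refine hx (a, b) (by exact_mod_cast hb1) ⟨ha1, hb2⟩
    · exact heq
  exact tendsto_of_liminf_eq_limsup hlu rfl hbd1 hbd2

end Birkhoff
section BirkhoffErgodic
set_option linter.unusedSectionVars false
variable {X : Type*} [MetricSpace X] [CompactSpace X] [Nonempty X]
  [MeasurableSpace X] [BorelSpace X] {T : X → X}

lemma integral_avg_eq {ν : Measure X} [IsProbabilityMeasure ν]
    (hT : Continuous T) (hm : MeasurePreserving T ν ν) (f : C(X, ℝ)) {n : ℕ} (hn : 1 ≤ n) :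
    ∫ x, birkhoffSum T f n x / n ∂ν = ∫ y, f y ∂ν := by
  have hint : ∀ k : ℕ, Integrable (fun x => f (T^[k] x)) ν :=
    fun k => integrable_of_bdd (f.continuous.measurable.comp (hT.iterate k).measurable)
      (fun x => abs_f_le f (T^[k] x))
  have h1 : ∫ x, birkhoffSum T f n x ∂ν = n * ∫ y, f y ∂ν := by
    unfold birkhoffSum
    rw [integral_finset_sum _ (fun k _ => hint k)]
    have : ∀ k ∈ Finset.range n, ∫ x, f (T^[k] x) ∂ν = ∫ y, f y ∂ν :=
      fun k _ => integral_comp_iterate hm f.continuous.measurable.aestronglyMeasurable k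
    rw [Finset.sum_congr rfl this, Finset.sum_const, Finset.card_range, nsmul_eq_mul]
  rw [integral_div, h1]
  have hn0 : ((n:ℝ)) ≠ 0 := by positivity
  field_simp

/-- Birkhoff's pointwise ergodic theorem for ergodic measures and continuous functions. -/
lemma birkhoff_ergodic_ae {ν : Measure X} [IsProbabilityMeasure ν] (hT : Continuous T)
    (hm : MeasurePreserving T ν ν)
    (herg : ∀ B : Set X, MeasurableSet B → T ⁻¹' B = B → ν B = 0 ∨ ν B = 1) (f : C(X, ℝ)) :
    ∀ᵐ x ∂ν, Tendsto (fun n => birkhoffSum T f n x / n) atTop (𝓝 (∫ y, f y ∂ν)) := by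
  set A : ℕ → X → ℝ := fun n x => birkhoffSum T f n x / n with hA
  have hAmeas : ∀ n, Measurable (A n) :=
    fun n => (measurable_birkhoffSum hT f.continuous.measurable n).div_const _
  have habs : ∀ n x, |A n x| ≤ ‖f‖ := fun n x => abs_avg_le f n x
  set u : X → ℝ := fun x => limsup (fun n => A n x) atTop with hu
  have hu_meas : Measurable u := Measurable.limsup hAmeas
  have hu_inv : ∀ x, u (T x) = u x := fun x =>
    limsup_eq_limsup_of_tendsto_sub (avg_shift_tendsto f x) (fun n => habs n (T x))
      (fun n => habs n x)
  have hu_le : ∀ x, u x ≤ ‖f‖ := by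
    intro x
    apply limsup_le_of_le ((bddBelow_of_abs (fun n => habs n x)).isCoboundedUnder_le)
    exact Eventually.of_forall (fun n => (abs_le.1 (habs n x)).2)
  have hu_ge : ∀ x, -‖f‖ ≤ u x := by
    intro x
    refine le_trans ?_ (liminf_le_limsup (bddAbove_of_abs (fun n => habs n x))
      (bddBelow_of_abs (fun n => habs n x)))
    apply le_liminf_of_le ((bddAbove_of_abs (fun n => habs n x)).isCoboundedUnder_ge)
    exact Eventually.of_forall (fun n => (abs_le.1 (habs n x)).1)
  -- the sets {u < q} are invariant
  have hAq_meas : ∀ q : ℚ, MeasurableSet {x | u x < (q:ℝ)} :=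
    fun q => measurableSet_lt hu_meas measurable_const
  have hAq_inv : ∀ q : ℚ, T ⁻¹' {x | u x < (q:ℝ)} = {x | u x < (q:ℝ)} := by
    intro q
    ext x
    simp only [Set.mem_preimage, Set.mem_setOf_eq, hu_inv x]
  have hdich : ∀ q : ℚ, ν {x | u x < (q:ℝ)} = 0 ∨ ν {x | u x < (q:ℝ)} = 1 :=
    fun q => herg _ (hAq_meas q) (hAq_inv q)
  set s : Set ℚ := {q | ν {x | u x < (q:ℝ)} = 1} with hs
  have hne : ((fun q : ℚ => (q:ℝ)) '' s).Nonempty := by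
    obtain ⟨q, hq⟩ := exists_rat_gt ‖f‖
    refine ⟨(q:ℝ), ⟨q, ?_, rfl⟩⟩
    have : {x | u x < (q:ℝ)} = Set.univ := by
      ext x; simp only [Set.mem_setOf_eq, Set.mem_univ, iff_true]
      exact lt_of_le_of_lt (hu_le x) hq
    rw [hs, Set.mem_setOf_eq, this]
    simp
  have hbdd : BddBelow ((fun q : ℚ => (q:ℝ)) '' s) := by
    refine ⟨-‖f‖ - 1, ?_⟩
    rintro r ⟨q, hq, rfl⟩
    by_contra hcon
    push_neg at hcon
    have hempty : {x | u x < (q:ℝ)} = ∅ := by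
      ext x; simp only [Set.mem_setOf_eq, Set.mem_empty_iff_false, iff_false, not_lt]
      have := hu_ge x
      linarith
    rw [hs, Set.mem_setOf_eq, hempty] at hq
    simp at hq
  set c₀ : ℝ := sInf ((fun q : ℚ => (q:ℝ)) '' s) with hc₀
  -- a.e. u ≤ c₀
  have claim1 : ∀ᵐ x ∂ν, u x ≤ c₀ := by
    have h1 : ∀ n : ℕ, ∀ᵐ x ∂ν, u x < c₀ + 1/(n+1) := by
      intro n
      have hlt : c₀ < c₀ + 1/(n+1) := by
        have : (0:ℝ) < 1/(n+1) := by positivity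
        linarith
      obtain ⟨r, hr, hrlt⟩ := exists_lt_of_csInf_lt hne hlt
      obtain ⟨q, hq, rfl⟩ := hr
      have hq1 : ν {x | u x < (q:ℝ)} = 1 := hq
      have : ν {x | u x < (q:ℝ)}ᶜ = 0 := by
        rw [measure_compl (hAq_meas q) (measure_ne_top ν _), hq1, measure_univ]
        simp
      filter_upwards [(mem_ae_iff).2 this] with x hx
      exact lt_trans hx hrlt
    rw [← ae_all_iff] at h1
    filter_upwards [h1] with x hx
    by_contra hcon
    push_neg at hcon
    obtain ⟨n, hn⟩ := exists_nat_one_div_lt (show (0:ℝ) < u x - c₀ by linarith)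
    have := hx n
    have : c₀ + 1/(n+1) < u x := by push_cast at hn ⊢; linarith
    linarith [hx n]
  -- a.e. c₀ ≤ u
  have claim2 : ∀ᵐ x ∂ν, c₀ ≤ u x := by
    have h1 : ∀ q : ℚ, ∀ᵐ x ∂ν, (q:ℝ) < c₀ → (q:ℝ) ≤ u x := by
      intro q
      by_cases hq : (q:ℝ) < c₀
      · have hqs : q ∉ s := by
          intro hmem
          have : c₀ ≤ (q:ℝ) := csInf_le hbdd ⟨q, hmem, rfl⟩
          linarith
        have h0 : ν {x | u x < (q:ℝ)} = 0 := (hdich q).resolve_right hqs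
        filter_upwards [(compl_mem_ae_iff).2 h0] with x hx
        intro _
        simp only [Set.mem_compl_iff, Set.mem_setOf_eq, not_lt] at hx
        exact hx
      · exact ae_of_all _ (fun x h => absurd h hq)
    rw [← ae_all_iff] at h1
    filter_upwards [h1] with x hx
    by_contra hcon
    push_neg at hcon
    obtain ⟨q, hq1, hq2⟩ := exists_rat_btwn hcon
    exact absurd (hx q hq2) (not_le.2 hq1)
  -- identify the constant via dominated convergence
  have htend := birkhoff_ae hT hm f
  have hDCT : Tendsto (fun n => ∫ x, A n x ∂ν) atTop (𝓝 (∫ x, u x ∂ν)) := by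
    apply tendsto_integral_of_dominated_convergence (fun _ => ‖f‖)
      (fun n => (hAmeas n).aestronglyMeasurable) (integrable_const _)
      (fun n => ae_of_all _ (fun x => by rw [Real.norm_eq_abs]; exact habs n x))
    exact htend
  have hconst : ∀ᵐ x ∂ν, u x = c₀ := by
    filter_upwards [claim1, claim2] with x h1 h2
    exact le_antisymm h1 h2
  have hintu : ∫ x, u x ∂ν = c₀ := by
    rw [integral_congr_ae (hconst.mono (fun x hx => hx))]
    simp
  have heva : ∀ᶠ n in atTop, ∫ x, A n x ∂ν = ∫ y, f y ∂ν := by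
    refine eventually_atTop.2 ⟨1, fun n hn => integral_avg_eq hT hm f hn⟩
  have : Tendsto (fun _ : ℕ => ∫ y, f y ∂ν) atTop (𝓝 (∫ x, u x ∂ν)) := hDCT.congr' heva
  have hc : c₀ = ∫ y, f y ∂ν := by
    rw [← hintu]
    exact (tendsto_nhds_unique tendsto_const_nhds this).symm
  filter_upwards [htend, hconst] with x hx1 hx2
  have h3 : limsup (fun n => A n x) atTop = ∫ y, f y ∂ν := by
    have h4 : u x = ∫ y, f y ∂ν := by rw [hx2, hc]
    exact h4
  rw [h3] at hx1
  exact hx1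

end BirkhoffErgodic
section LogAvg
set_option linter.unusedSectionVars false
variable {X : Type*} [MetricSpace X] [CompactSpace X] [Nonempty X]
  [MeasurableSpace X] [BorelSpace X] {T : X → X}

lemma abs_wsum_le {c : ℕ → ℝ} {d : ℝ} (h : ∀ k, |c k| ≤ d) (n : ℕ) :
    |∑ k ∈ Finset.range n, (1 / (k + 1 : ℝ)) * c k| ≤ H n * d := by
  calc |∑ k ∈ Finset.range n, (1 / (k + 1 : ℝ)) * c k|
      ≤ ∑ k ∈ Finset.range n, |(1 / (k + 1 : ℝ)) * c k| := Finset.abs_sum_le_sum_abs _ _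
    _ ≤ ∑ k ∈ Finset.range n, (1 / (k + 1 : ℝ)) * d := by
        apply Finset.sum_le_sum
        intro k _
        rw [abs_mul, abs_of_nonneg (by positivity : (0:ℝ) ≤ 1 / (k + 1 : ℝ))]
        have : (0:ℝ) ≤ 1 / (k + 1 : ℝ) := by positivity
        exact mul_le_mul_of_nonneg_left (h k) this
    _ = H n * d := by rw [← Finset.sum_mul]; rfl

lemma abs_log_avg_le (f : C(X, ℝ)) (x : X) (n : ℕ) :
    |(1 / H n) * ∑ k ∈ Finset.range n, (1 / (k + 1 : ℝ)) * f (T^[k] x)| ≤ ‖f‖ := by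
  rcases Nat.eq_zero_or_pos n with hn | hn
  · subst hn; simp [norm_nonneg]
  · have hH := H_pos hn
    rw [abs_mul, abs_of_pos (by positivity : (0:ℝ) < 1 / H n)]
    have h1 := abs_wsum_le (c := fun k => f (T^[k] x)) (d := ‖f‖) (fun k => abs_f_le f _) n
    calc (1 / H n) * |∑ k ∈ Finset.range n, (1 / (k + 1 : ℝ)) * f (T^[k] x)|
        ≤ (1 / H n) * (H n * ‖f‖) :=
          mul_le_mul_of_nonneg_left h1 (by positivity)
      _ = ‖f‖ := by field_simp

lemma abs_log_avg_sub_le (f g : C(X, ℝ)) (x : X) {n : ℕ} (hn : 1 ≤ n) :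
    |(1 / H n) * ∑ k ∈ Finset.range n, (1 / (k + 1 : ℝ)) * f (T^[k] x)
      - (1 / H n) * ∑ k ∈ Finset.range n, (1 / (k + 1 : ℝ)) * g (T^[k] x)| ≤ dist f g := by
  have hH := H_pos hn
  rw [← mul_sub, ← Finset.sum_sub_distrib]
  have h1 : ∀ k ∈ Finset.range n, (1 / (k + 1 : ℝ)) * f (T^[k] x)
      - (1 / (k + 1 : ℝ)) * g (T^[k] x)
      = (1 / (k + 1 : ℝ)) * (f (T^[k] x) - g (T^[k] x)) := fun k _ => by ring
  rw [Finset.sum_congr rfl h1, abs_mul, abs_of_pos (by positivity : (0:ℝ) < 1 / H n)]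
  have h2 := abs_wsum_le (c := fun k => f (T^[k] x) - g (T^[k] x)) (d := dist f g)
    (fun k => by
      rw [← Real.dist_eq]
      exact ContinuousMap.dist_apply_le_dist _) n
  calc (1 / H n) * |∑ k ∈ Finset.range n, (1 / (k + 1 : ℝ)) * (f (T^[k] x) - g (T^[k] x))|
      ≤ (1 / H n) * (H n * dist f g) := mul_le_mul_of_nonneg_left h2 (by positivity)
    _ = dist f g := by field_simp

lemma abs_integral_sub_le {ν : Measure X} [IsProbabilityMeasure ν] (f g : C(X, ℝ)) :
    |∫ y, f y ∂ν - ∫ y, g y ∂ν| ≤ dist f g := by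
  have hif : Integrable (fun y => f y) ν :=
    integrable_of_bdd f.continuous.measurable (fun x => abs_f_le f x)
  have hig : Integrable (fun y => g y) ν :=
    integrable_of_bdd g.continuous.measurable (fun x => abs_f_le g x)
  rw [← integral_sub hif hig]
  have := norm_integral_le_of_norm_le_const (μ := ν) (f := fun y => f y - g y)
    (C := dist f g) (ae_of_all _ fun y => by
      rw [Real.norm_eq_abs, ← Real.dist_eq]
      exact ContinuousMap.dist_apply_le_dist _)
  rw [Real.norm_eq_abs] at this
  simpa [measure_univ] using this

/-- Two finite Borel measures on a compact metric space agreeing on integrals of continuous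
functions are equal. -/
lemma measure_ext_C {m₁ m₂ : Measure X} [IsFiniteMeasure m₁] [IsFiniteMeasure m₂]
    (h : ∀ f : C(X, ℝ), ∫ x, f x ∂m₁ = ∫ x, f x ∂m₂) : m₁ = m₂ := by
  apply ext_of_forall_lintegral_eq_of_IsFiniteMeasure
  intro f
  have hgc : Continuous fun x => ((f x : ℝ)) := NNReal.continuous_coe.comp f.continuous
  set g : C(X, ℝ) := ⟨fun x => ((f x : ℝ)), hgc⟩ with hgdef
  have hnn : ∀ x, 0 ≤ g x := fun x => (f x).2
  have key : ∀ (m : Measure X), IsFiniteMeasure m →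
      ∫⁻ x, ((f x : ℝ≥0∞)) ∂m = ENNReal.ofReal (∫ x, g x ∂m) := by
    intro m hfin
    rw [ofReal_integral_eq_lintegral_ofReal
      (integrable_of_bdd g.continuous.measurable (fun x => abs_f_le g x))
      (ae_of_all _ hnn)]
    congr 1
    funext x
    rw [show g x = ((f x : ℝ)) from rfl, ENNReal.ofReal_coe_nnreal]
  rw [key m₁ inferInstance, key m₂ inferInstance, h g]

/-- Forward direction: for an ergodic measure, the logarithmic averages of every continuous
function converge almost everywhere to the space average. -/
lemma forward_ae {ν : Measure X} [IsProbabilityMeasure ν] (hT : Continuous T)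
    (hm : MeasurePreserving T ν ν)
    (herg : ∀ B : Set X, MeasurableSet B → T ⁻¹' B = B → ν B = 0 ∨ ν B = 1) :
    ∀ᵐ x ∂ν, ∀ f : C(X, ℝ),
      Tendsto (fun n => (1 / H n) * ∑ k ∈ Finset.range n, (1 / (k + 1 : ℝ)) * f (T^[k] x))
        atTop (𝓝 (∫ y, f y ∂ν)) := by
  obtain ⟨D, hDc, hDd⟩ := TopologicalSpace.exists_countable_dense C(X, ℝ)
  have hae : ∀ᵐ x ∂ν, ∀ g ∈ D,
      Tendsto (fun n => (1 / H n) * ∑ k ∈ Finset.range n, (1 / (k + 1 : ℝ)) * g (T^[k] x))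
        atTop (𝓝 (∫ y, g y ∂ν)) := by
    rw [ae_ball_iff hDc]
    intro g _
    filter_upwards [birkhoff_ergodic_ae hT hm herg g] with x hx
    have hx' : Tendsto (fun n => (∑ k ∈ Finset.range n, g (T^[k] x)) / (n:ℝ)) atTop
        (𝓝 (∫ y, g y ∂ν)) := hx
    exact cesaro_to_log hx'
  filter_upwards [hae] with x hx f
  rw [Metric.tendsto_atTop]
  intro ε hε
  obtain ⟨g, hgD, hdist⟩ := hDd.exists_dist_lt f (show (0:ℝ) < ε/4 by linarith)
  obtain ⟨N, hN⟩ := Metric.tendsto_atTop.1 (hx g hgD) (ε/4) (by linarith)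
  refine ⟨max N 1, fun n hn => ?_⟩
  have hn1 : 1 ≤ n := le_trans (le_max_right _ _) hn
  have hnN : N ≤ n := le_trans (le_max_left _ _) hn
  have h1 := abs_log_avg_sub_le (T := T) f g x hn1
  have h2 := hN n hnN
  have h3 := abs_integral_sub_le (ν := ν) g f
  rw [dist_comm g f] at h3
  rw [Real.dist_eq] at h2 ⊢
  set a1 := (1 / H n) * ∑ k ∈ Finset.range n, (1 / (k + 1 : ℝ)) * f (T^[k] x) with ha1
  set a2 := (1 / H n) * ∑ k ∈ Finset.range n, (1 / (k + 1 : ℝ)) * g (T^[k] x) with ha2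
  have t1 : |a1 - ∫ y, f y ∂ν| ≤ |a1 - a2| + |a2 - ∫ y, f y ∂ν| := abs_sub_le _ _ _
  have t2 : |a2 - ∫ y, f y ∂ν| ≤ |a2 - ∫ y, g y ∂ν| + |∫ y, g y ∂ν - ∫ y, f y ∂ν| :=
    abs_sub_le _ _ _
  linarith

end LogAvg
/-- A Borel probability measure `μ` is `T`-invariant if `μ(T⁻¹B) = μ(B)` for every Borel set. -/
def IsInvariantMeasure {X : Type*} [MetricSpace X] [MeasurableSpace X]
    (T : X → X) (μ : ProbabilityMeasure X) : Prop :=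
  ∀ B : Set X, MeasurableSet B → μ (T ⁻¹' B) = μ B

/-- `V^log_T(x)`: all weak* limits of the logarithmic empirical measures
`(1/H_{n_i}) ∑_{k=1}^{n_i} (1/k) δ_{T^{k-1}x}` along strictly increasing sequences `n_i → ∞`. -/
def VTlog {X : Type*} [MetricSpace X] [MeasurableSpace X] (T : X → X) (x : X) :
    Set (ProbabilityMeasure X) :=
  {μ | ∃ n : ℕ → ℕ, StrictMono n ∧ ∀ f : C(X, ℝ),
    Tendsto (fun i : ℕ =>
        (1 / H (n i)) * ∑ k ∈ Finset.range (n i), (1 / (k + 1 : ℝ)) * f (T^[k] x))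
      atTop (𝓝 (∫ y, f y ∂(μ : Measure X)))}

/-- `Ṽ^log_T(x)`: all weak* limits of the window logarithmic empirical measures
`(1/H_{n_i-m_i}) ∑_{k=m_i+1}^{n_i} (1/(k-m_i)) δ_{T^{k-1}x}` with `n_i - m_i → ∞`. -/
def VTtildeLog {X : Type*} [MetricSpace X] [MeasurableSpace X] (T : X → X) (x : X) :
    Set (ProbabilityMeasure X) :=
  {μ | ∃ m n : ℕ → ℕ, (∀ i, m i < n i) ∧ Tendsto (fun i => n i - m i) atTop atTop ∧
    ∀ f : C(X, ℝ),
      Tendsto (fun i : ℕ => (1 / H (n i - m i)) *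
          ∑ j ∈ Finset.range (n i - m i), (1 / (j + 1 : ℝ)) * f (T^[m i + j] x))
        atTop (𝓝 (∫ y, f y ∂(μ : Measure X)))}

/-- A `T`-invariant Borel probability measure `μ` is ergodic if every Borel set `B` with
`T⁻¹B = B` satisfies `μ(B) ∈ {0,1}`. -/
def IsErgodicMeasure {X : Type*} [MetricSpace X] [MeasurableSpace X]
    (T : X → X) (μ : ProbabilityMeasure X) : Prop :=
  IsInvariantMeasure T μ ∧
    ∀ B : Set X, MeasurableSet B → T ⁻¹' B = B → μ B = 0 ∨ μ B = 1

/-- A `T`-invariant measure `μ` is ergodic if and only if `V^log_T(x) = {μ}` for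
`μ`-almost every `x ∈ X`. -/
theorem ergodic_iff_ae_VTlog_singleton
    {X : Type*} [MetricSpace X] [CompactSpace X] [Nonempty X]
    [MeasurableSpace X] [BorelSpace X]
    (T : X → X) (hT : Continuous T)
    (μ : ProbabilityMeasure X) (hμ : IsInvariantMeasure T μ) :
    IsErgodicMeasure T μ ↔ ∀ᵐ x ∂(μ : Measure X), VTlog T x = {μ} := by
  have hTm : Measurable T := hT.measurable
  set ν : Measure X := (μ : Measure X) with hν
  have hm : MeasurePreserving T ν ν := by
    refine ⟨hTm, ?_⟩
    apply Measure.ext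
    intro B hB
    calc ν.map T B = ν (T ⁻¹' B) := Measure.map_apply hTm hB
      _ = ((μ (T ⁻¹' B) : ℝ≥0) : ℝ≥0∞) :=
          (ProbabilityMeasure.ennreal_coeFn_eq_coeFn_toMeasure μ _).symm
      _ = ((μ B : ℝ≥0) : ℝ≥0∞) := by rw [hμ B hB]
      _ = ν B := ProbabilityMeasure.ennreal_coeFn_eq_coeFn_toMeasure μ B
  constructor
  · -- ergodic → a.e. VTlog = {μ}
    intro herg
    have herg' : ∀ B : Set X, MeasurableSet B → T ⁻¹' B = B → ν B = 0 ∨ ν B = 1 := by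
      intro B hB hBinv
      rcases herg.2 B hB hBinv with h | h
      · left
        rw [← ProbabilityMeasure.ennreal_coeFn_eq_coeFn_toMeasure μ B, h]
        simp
      · right
        rw [← ProbabilityMeasure.ennreal_coeFn_eq_coeFn_toMeasure μ B, h]
        simp
    filter_upwards [forward_ae hT hm herg'] with x hx
    apply Set.eq_singleton_iff_unique_mem.2
    constructor
    · exact ⟨fun i => i, strictMono_id, fun f => hx f⟩
    · rintro ν' ⟨n, hn, hconv⟩
      have key : ∀ f : C(X, ℝ), ∫ y, f y ∂(ν' : Measure X) = ∫ y, f y ∂ν := by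
        intro f
        exact tendsto_nhds_unique (hconv f) ((hx f).comp hn.tendsto_atTop)
      exact ProbabilityMeasure.toMeasure_injective (measure_ext_C key)
  · -- a.e. VTlog = {μ} → ergodic
    intro hae
    refine ⟨hμ, ?_⟩
    intro B hB hBinv
    -- iterated invariance of B
    have hBit : ∀ k : ℕ, T^[k] ⁻¹' B = B := by
      intro k
      induction k with
      | zero => simp
      | succ k ih => rw [Function.iterate_succ, Set.preimage_comp, ih, hBinv]
    have hmem_iff : ∀ (k : ℕ) (x : X), T^[k] x ∈ B ↔ x ∈ B := by
      intro k x
      constructor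
      · intro hmem
        have : x ∈ T^[k] ⁻¹' B := hmem
        rwa [hBit k] at this
      · intro hmem
        have : x ∈ T^[k] ⁻¹' B := by rw [hBit k]; exact hmem
        exact this
    -- a.e. convergence of logarithmic averages for every fixed f
    have hconv : ∀ f : C(X, ℝ), ∀ᵐ x ∂ν,
        Tendsto (fun n => (1 / H n) * ∑ k ∈ Finset.range n, (1 / (k + 1 : ℝ)) * f (T^[k] x))
          atTop (𝓝 (∫ y, f y ∂ν)) := by
      intro f
      filter_upwards [birkhoff_ae hT hm f, hae] with x hx1 hx2
      have hx1' : Tendsto (fun n => (∑ k ∈ Finset.range n, f (T^[k] x)) / (n:ℝ)) atTop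
          (𝓝 (limsup (fun n => birkhoffSum T f n x / n) atTop)) := hx1
      have hL := cesaro_to_log hx1'
      have hμmem : μ ∈ VTlog T x := by rw [hx2]; exact Set.mem_singleton μ
      obtain ⟨nseq, hmono, hcv⟩ := hμmem
      have h2 := hL.comp hmono.tendsto_atTop
      have heq := tendsto_nhds_unique (hcv f) h2
      rwa [← heq] at hL
    -- the integral identity over B
    have hint_eq : ∀ f : C(X, ℝ), ∫ x in B, f x ∂ν = (ν B).toReal * ∫ y, f y ∂ν := by
      intro f
      set L : ℕ → X → ℝ :=
        fun n x => (1 / H n) * ∑ k ∈ Finset.range n, (1 / (k + 1 : ℝ)) * f (T^[k] x) with hLdef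
      have hLmeas : ∀ n, Measurable (L n) := by
        intro n
        apply Measurable.const_mul
        exact Finset.measurable_sum _
          (fun k _ => ((f.continuous.comp (hT.iterate k)).measurable).const_mul _)
      have hLb : ∀ n x, |L n x| ≤ ‖f‖ := fun n x => abs_log_avg_le (T := T) f x n
      have hDCT : Tendsto (fun n => ∫ x in B, L n x ∂ν) atTop
          (𝓝 (∫ _ in B, (∫ y, f y ∂ν) ∂ν)) := by
        apply tendsto_integral_of_dominated_convergence (fun _ => ‖f‖)
          (fun n => (hLmeas n).aestronglyMeasurable) (integrable_const _)
          (fun n => ae_of_all _ (fun x => by rw [Real.norm_eq_abs]; exact hLb n x))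
        exact ae_restrict_of_ae (hconv f)
      have hRHS : ∫ _ in B, (∫ y, f y ∂ν) ∂ν = (ν B).toReal * ∫ y, f y ∂ν := by
        rw [setIntegral_const, smul_eq_mul, measureReal_def]
      have heach : ∀ k : ℕ, ∫ x in B, f (T^[k] x) ∂ν = ∫ x in B, f x ∂ν := by
        intro k
        set φ : X → ℝ := B.indicator f with hφ
        have hφm : Measurable φ := f.continuous.measurable.indicator hB
        have hcomp : ∀ x, B.indicator (fun x => f (T^[k] x)) x = φ (T^[k] x) := by
          intro x
          by_cases hx : x ∈ B
          · rw [Set.indicator_of_mem hx, hφ, Set.indicator_of_mem ((hmem_iff k x).2 hx)]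
          · rw [Set.indicator_of_notMem hx, hφ,
              Set.indicator_of_notMem (fun hc => hx ((hmem_iff k x).1 hc))]
        rw [← integral_indicator hB, ← integral_indicator hB]
        calc ∫ x, B.indicator (fun x => f (T^[k] x)) x ∂ν
            = ∫ x, φ (T^[k] x) ∂ν := integral_congr_ae (ae_of_all _ hcomp)
          _ = ∫ x, φ x ∂ν := integral_comp_iterate hm hφm.aestronglyMeasurable k
      have hconst : ∀ᶠ n in atTop, ∫ x in B, L n x ∂ν = ∫ x in B, f x ∂ν := by
        refine eventually_atTop.2 ⟨1, fun n hn => ?_⟩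
        have hHn := H_pos hn
        have hterm : ∀ k : ℕ, Integrable (fun x => (1 / (k + 1 : ℝ)) * f (T^[k] x))
            (ν.restrict B) :=
          fun k => ((integrable_of_bdd ((f.continuous.comp (hT.iterate k)).measurable)
            (fun x => abs_f_le f (T^[k] x))).integrableOn).const_mul _
        have step1 : ∫ x in B, L n x ∂ν
            = (1 / H n) * ∑ k ∈ Finset.range n, (1 / (k + 1 : ℝ)) * ∫ x in B, f (T^[k] x) ∂ν := by
          rw [hLdef]
          rw [integral_const_mul]
          congr 1
          rw [integral_finset_sum _ (fun k _ => hterm k)]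
          exact Finset.sum_congr rfl (fun k _ => integral_const_mul _ _)
        rw [step1, Finset.sum_congr rfl (fun k _ => by rw [heach k]), ← Finset.sum_mul]
        have : (∑ k ∈ Finset.range n, (1 / (k + 1 : ℝ))) = H n := rfl
        rw [this]
        field_simp
      have hlim : Tendsto (fun _ : ℕ => ∫ x in B, f x ∂ν) atTop
          (𝓝 (∫ _ in B, (∫ y, f y ∂ν) ∂ν)) := hDCT.congr' hconst
      have := tendsto_nhds_unique tendsto_const_nhds hlim
      rw [hRHS] at this
      exact this
    -- measure equality and conclusion
    haveI : IsFiniteMeasure ((ν B) • ν) := by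
      constructor
      rw [Measure.smul_apply, smul_eq_mul, measure_univ, mul_one]
      exact measure_lt_top ν B
    have hmeq : ν.restrict B = (ν B) • ν := by
      apply measure_ext_C
      intro f
      rw [integral_smul_measure, smul_eq_mul]
      exact hint_eq f
    have h2 : (ν.restrict B) Bᶜ = ν (Bᶜ ∩ B) := Measure.restrict_apply hB.compl
    have h1 : ν (Bᶜ ∩ B) = 0 := by rw [Set.compl_inter_self]; exact measure_empty
    have h3 : ((ν B) • ν) Bᶜ = ν B * ν Bᶜ := by rw [Measure.smul_apply, smul_eq_mul]
    have h4 : ν B * ν Bᶜ = 0 := by rw [← h3, ← hmeq, h2, h1]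
    rcases mul_eq_zero.1 h4 with h | h
    · left
      have : ((μ B : ℝ≥0) : ℝ≥0∞) = 0 := by
        rw [ProbabilityMeasure.ennreal_coeFn_eq_coeFn_toMeasure μ B]
        exact h
      exact_mod_cast this
    · right
      have hB1 : ν B = 1 := (prob_compl_eq_zero_iff hB).1 h
      have : ((μ B : ℝ≥0) : ℝ≥0∞) = 1 := by
        rw [ProbabilityMeasure.ennreal_coeFn_eq_coeFn_toMeasure μ B]
        exact hB1
      exact_mod_cast this
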